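/- For k, n ≥ 0, every étale morphism of Feynman graphs L^k → L^n is pointwise injective (its edge, half-edge and vertex components are injective); moreover, the set of étale morphisms L^k → L^n has exactly 2(n − k + 1) elements if n ≥ k, and is empty if n < k. -/

import Mathlib

/-- A Feynman graph: finite sets of edges `E`, half-edges `H`, vertices `V`,
with an injective attachment `s : H → E`, a target map `t : H → V`, and a
fixed-point-free involution `inv : E → E`. -/
structure FG where
  E : Type
  H : Type
  V : Type
  finE : Finite E
  finH : Finite H
  finV : Finite V
  s : H → E
  t : H → V
  inv : E → E
  s_inj : Function.Injective s
  inv_inv : ∀ e, inv (inv e) = e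
  inv_ne : ∀ e, inv e ≠ e

attribute [instance] FG.finE FG.finH FG.finV

/-- A morphism of Feynman graphs. -/
structure FGHom (G G' : FG) where
  fE : G.E → G'.E
  fH : G.H → G'.H
  fV : G.V → G'.V
  comm_inv : ∀ e, fE (G.inv e) = G'.inv (fE e)
  comm_s : ∀ h, fE (G.s h) = G'.s (fH h)
  comm_t : ∀ h, fV (G.t h) = G'.t (fH h)

/-- Composition of morphisms of Feynman graphs. -/
def FGHom.comp {G₁ G₂ G₃ : FG} (g : FGHom G₂ G₃) (f : FGHom G₁ G₂) : FGHom G₁ G₃ where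
  fE := g.fE ∘ f.fE
  fH := g.fH ∘ f.fH
  fV := g.fV ∘ f.fV
  comm_inv := fun e => by simp only [Function.comp_apply, f.comm_inv, g.comm_inv]
  comm_s := fun h => by simp only [Function.comp_apply, f.comm_s, g.comm_s]
  comm_t := fun h => by simp only [Function.comp_apply, f.comm_t, g.comm_t]

/-- A morphism is an isomorphism if all three components are bijections. -/
def FGHom.IsIso {G G' : FG} (f : FGHom G G') : Prop :=
  Function.Bijective f.fE ∧ Function.Bijective f.fH ∧ Function.Bijective f.fV

/-- A morphism is locally injective if it is injective on each fibre `t⁻¹(v)`. -/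
def FGHom.LocInj {G G' : FG} (f : FGHom G G') : Prop :=
  ∀ h₁ h₂ : G.H, G.t h₁ = G.t h₂ → f.fH h₁ = f.fH h₂ → h₁ = h₂

/-- A morphism is étale if it induces a bijection `t⁻¹(v) → t'⁻¹(f_V v)`
for every vertex `v`. -/
def FGHom.Etale {G G' : FG} (f : FGHom G G') : Prop :=
  f.LocInj ∧
  ∀ (v : G.V) (h' : G'.H), G'.t h' = f.fV v → ∃ h : G.H, G.t h = v ∧ f.fH h = h'

/-- A port is an edge not in the image of `s`. -/
def FG.IsPort (G : FG) (e : G.E) : Prop := e ∉ Set.range G.s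

/-- An inner edge: both `e` and `inv e` are in the image of `s`. -/
def FG.IsInner (G : FG) (e : G.E) : Prop :=
  e ∈ Set.range G.s ∧ G.inv e ∈ Set.range G.s

/-- Connectedness: `E ⊔ V` is nonempty and every compatible `Bool`-colouring
of edges and vertices is constant. -/
def FG.Connected (G : FG) : Prop :=
  Nonempty (G.E ⊕ G.V) ∧
  ∀ (cE : G.E → Bool) (cV : G.V → Bool),
    (∀ e, cE (G.inv e) = cE e) →
    (∀ h, cV (G.t h) = cE (G.s h)) →
    ∀ x y : G.E ⊕ G.V, Sum.elim cE cV x = Sum.elim cE cV y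

/-- The line graph `L^k` (for `k ≥ 0`): edges `l_0, …, l_{2k+1}` (here the pair
`{l_{2j}, l_{2j+1}}` is encoded as `(j, false)` and `(j, true)`), `k` vertices,
and `2k` half-edges attaching `l_{2i-1}` and `l_{2i}` to the vertex `v_i`. -/
def lineGraph (k : ℕ) : FG where
  E := Fin (k+1) × Bool
  H := Fin k × Bool
  V := Fin k
  finE := inferInstance
  finH := inferInstance
  finV := inferInstance
  s := fun p => if p.2 then (p.1.castSucc, true) else (p.1.succ, false)
  t := fun p => p.1
  inv := fun p => (p.1, !p.2)
  s_inj := by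
    rintro ⟨i, bi⟩ ⟨j, bj⟩ hij
    cases bi <;> cases bj <;> simp_all [Fin.succ_inj, Fin.castSucc_inj]
  inv_inv := by rintro ⟨i, b⟩; simp
  inv_ne := by
    rintro ⟨i, b⟩ h
    rw [Prod.mk.injEq] at h
    exact (Bool.not_ne_self b) h.2

/-- The wheel graph `W^{m+1}` (this definition, with parameter `m : ℕ`, yields
exactly the wheel graphs `W^m` for `m ≥ 1`): `m+1` vertices in `Fin (m+1)`,
the vertex `i` carrying the two edges `(i, false)` and `(i, true)` (which are
also the half-edges, via `s = id`), and the involution pairing `(i, true)`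
with `(i+1, false)` cyclically. -/
def wheelGraph (m : ℕ) : FG where
  E := Fin (m+1) × Bool
  H := Fin (m+1) × Bool
  V := Fin (m+1)
  finE := inferInstance
  finH := inferInstance
  finV := inferInstance
  s := id
  t := fun p => p.1
  inv := fun p => if p.2 then (p.1 + 1, false) else (p.1 - 1, true)
  s_inj := fun _ _ h => h
  inv_inv := by
    rintro ⟨i, b⟩
    cases b <;> simp
  inv_ne := by
    rintro ⟨i, b⟩ h
    cases b <;> simp_all

section Aux

lemma FGHom.ext' {G G' : FG} {f g : FGHom G G'} (hE : f.fE = g.fE)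
    (hH : f.fH = g.fH) (hV : f.fV = g.fV) : f = g := by
  cases f; cases g; simp_all

/-- The ascending (order preserving) étale morphism with offset `a`. -/
def ascHom (k n a : ℕ) (hkn : a + k ≤ n) : FGHom (lineGraph k) (lineGraph n) where
  fE := fun p => (⟨a + p.1.val, by have := p.1.isLt; omega⟩, p.2)
  fH := fun p => (⟨a + p.1.val, by have := p.1.isLt; omega⟩, p.2)
  fV := fun i => ⟨a + i.val, by have := i.isLt; omega⟩
  comm_inv := by rintro ⟨j, b⟩; rfl
  comm_s := by
    rintro ⟨i, b⟩
    cases b <;> simp [lineGraph, Prod.ext_iff, Fin.ext_iff] <;> omega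
  comm_t := by rintro ⟨i, b⟩; rfl

/-- The descending (order reversing) étale morphism sending edge pair `j`
to edge pair `m - j`. -/
def descHom (k n m : ℕ) (h1 : k ≤ m) (h2 : m ≤ n) : FGHom (lineGraph k) (lineGraph n) where
  fE := fun p => (⟨m - p.1.val, by omega⟩, !p.2)
  fH := fun p => (⟨m - 1 - p.1.val, by have := p.1.isLt; omega⟩, !p.2)
  fV := fun i => ⟨m - 1 - i.val, by have := i.isLt; omega⟩
  comm_inv := by rintro ⟨j, b⟩; cases b <;> rfl
  comm_s := by
    rintro ⟨i, b⟩
    have := i.isLt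
    cases b <;> simp [lineGraph, Prod.ext_iff, Fin.ext_iff] <;> omega
  comm_t := by rintro ⟨i, b⟩; rfl

lemma ascHom_etale (k n a : ℕ) (hkn : a + k ≤ n) : (ascHom k n a hkn).Etale := by
  constructor
  · rintro ⟨i, b⟩ ⟨i', b'⟩ _ hH
    simp only [ascHom] at hH
    injection hH with h1 h2
    injection h1 with h1
    have hi : i = i' := Fin.ext (by omega)
    rw [hi, h2]
  · rintro v ⟨w, b⟩ hw
    refine ⟨(v, b), ?_, ?_⟩
    · rfl
    simp only [lineGraph] at hw
    subst hw
    rfl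

lemma descHom_etale (k n m : ℕ) (h1 : k ≤ m) (h2 : m ≤ n) : (descHom k n m h1 h2).Etale := by
  constructor
  · rintro ⟨i, b⟩ ⟨i', b'⟩ _ hH
    have := i.isLt; have := i'.isLt
    simp only [descHom] at hH
    injection hH with h1 h2
    injection h1 with h1
    have hb2 : b = b' := by simpa using h2
    have hi : i = i' := Fin.ext (by omega)
    rw [hi, hb2]
  · rintro v ⟨w, b⟩ hw
    refine ⟨(v, !b), ?_, ?_⟩
    · rfl
    simp only [lineGraph] at hw
    subst hw
    simp [descHom]; rfl

end Aux

lemma descHom_eq (k n : ℕ) {m m' : ℕ} (h : m = m') (h1 : k ≤ m) (h2 : m ≤ n)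
    (h1' : k ≤ m') (h2' : m' ≤ n) : descHom k n m h1 h2 = descHom k n m' h1' h2' := by
  subst h; rfl

lemma fE_eq_of_fH_eq {k n : ℕ} (hk : 0 < k) (f g : FGHom (lineGraph k) (lineGraph n))
    (h : f.fH = g.fH) : f.fE = g.fE := by
  have hs : ∀ p : (lineGraph k).H, f.fE ((lineGraph k).s p) = g.fE ((lineGraph k).s p) := by
    intro p; rw [f.comm_s, g.comm_s, h]
  have hinv : ∀ e, f.fE e = g.fE e →
      f.fE ((lineGraph k).inv e) = g.fE ((lineGraph k).inv e) := by
    intro e he; rw [f.comm_inv, g.comm_inv, he]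
  funext p
  rcases p with ⟨⟨j, hj⟩, c⟩
  rcases Nat.lt_or_ge j k with hjk | hjk
  · have htrue : f.fE (⟨j, hj⟩, true) = g.fE (⟨j, hj⟩, true) := by
      have hh : ((⟨j, hj⟩ : Fin (k+1)), true) = (lineGraph k).s ((⟨j, hjk⟩ : Fin k), true) := rfl
      rw [hh]; exact hs _
    cases c
    · have h2 := hinv _ htrue
      have hh : (lineGraph k).inv ((⟨j, hj⟩ : Fin (k+1)), true) =
          ((⟨j, hj⟩ : Fin (k+1)), false) := rfl
      rwa [hh] at h2
    · exact htrue
  · have hjk' : j = k := by omega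
    have hfalse : f.fE (⟨j, hj⟩, false) = g.fE (⟨j, hj⟩, false) := by
      have hh : ((⟨j, hj⟩ : Fin (k+1)), false) =
          (lineGraph k).s ((⟨k-1, by omega⟩ : Fin k), false) := by
        have : (⟨j, hj⟩ : Fin (k+1)) = Fin.succ (⟨k-1, by omega⟩ : Fin k) :=
          Fin.ext (by simp; omega)
        rw [this]; rfl
      rw [hh]; exact hs _
    cases c
    · exact hfalse
    · have h2 := hinv _ hfalse
      have hh : (lineGraph k).inv ((⟨j, hj⟩ : Fin (k+1)), false) =
          ((⟨j, hj⟩ : Fin (k+1)), true) := rfl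
      rwa [hh] at h2

lemma classify (k n : ℕ) (f : FGHom (lineGraph k) (lineGraph n)) (hf : f.Etale) :
    (∃ (a : ℕ) (h : a + k ≤ n), f = ascHom k n a h) ∨
    (∃ (m : ℕ) (h1 : k ≤ m) (h2 : m ≤ n), f = descHom k n m h1 h2) := by
  rcases Nat.eq_zero_or_pos k with rfl | hk
  · -- k = 0 : everything determined by fE (0, false)
    rcases hp : f.fE ((0 : Fin 1), false) with ⟨e, b⟩
    have he := e.isLt
    have hinv : f.fE ((0 : Fin 1), true) = (e, !b) := by
      have h := f.comm_inv ((0 : Fin 1), false)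
      simp only [lineGraph] at h
      rw [hp] at h
      simpa [lineGraph] using h
    have hHe : ∀ p : (lineGraph 0).H, False := by
      rintro ⟨i, c⟩; exact absurd i.isLt (by omega)
    cases b
    · left
      refine ⟨e.val, by omega, ?_⟩
      apply FGHom.ext'
      · funext p
        rcases p with ⟨j, c⟩
        have : j = 0 := Fin.ext (by have := j.isLt; omega)
        subst this
        cases c
        · rw [hp]; simp [ascHom, Prod.ext_iff, Fin.ext_iff]; rfl
        · rw [hinv]; simp [ascHom, Prod.ext_iff, Fin.ext_iff]; rfl
      · funext p
        exact absurd (show (p : Fin 0 × Bool).1.val < 0 from (p : Fin 0 × Bool).1.isLt) (by omega)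
      · funext v
        exact (show Fin 0 from v).elim0
    · right
      refine ⟨e.val, by omega, by omega, ?_⟩
      apply FGHom.ext'
      · funext p
        rcases p with ⟨j, c⟩
        have : j = 0 := Fin.ext (by have := j.isLt; omega)
        subst this
        cases c
        · rw [hp]; simp [descHom, Prod.ext_iff, Fin.ext_iff]; rfl
        · rw [hinv]; simp [descHom, Prod.ext_iff, Fin.ext_iff]; rfl
      · funext p
        exact absurd (show (p : Fin 0 × Bool).1.val < 0 from (p : Fin 0 × Bool).1.isLt) (by omega)
      · funext v
        exact (show Fin 0 from v).elim0
  · -- k ≥ 1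
    -- the first component of a half-edge image is the vertex image
    have ht1 : ∀ (i : Fin k) (c : Bool), (f.fH (i, c)).1 = f.fV i := by
      intro i c
      exact (f.comm_t (i, c)).symm
    -- the two half-edges at a vertex go to opposite half-edges
    have hb : ∀ i : Fin k, (f.fH (i, false)).2 = !(f.fH (i, true)).2 := by
      intro i
      have hne : f.fH (i, false) ≠ f.fH (i, true) := by
        intro h
        have h2 := hf.1 (i, false) (i, true) rfl h
        injection h2 with hh1 hh2
        exact Bool.false_ne_true hh2
      have h1 := ht1 i false
      have h2 := ht1 i true
      have hne2 : (f.fH (i, false)).2 ≠ (f.fH (i, true)).2 := by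
        intro h
        exact hne (Prod.ext_iff.mpr ⟨h1.trans h2.symm, h⟩)
      revert hne2
      cases (f.fH (i, false)).2 <;> cases (f.fH (i, true)).2 <;> simp
    -- pair form of half-edge images
    have hp1 : ∀ i : Fin k, f.fH (i, true) = (f.fV i, (f.fH (i, true)).2) :=
      fun i => Prod.ext_iff.mpr ⟨ht1 i true, rfl⟩
    have hp0 : ∀ i : Fin k, f.fH (i, false) = (f.fV i, !(f.fH (i, true)).2) :=
      fun i => Prod.ext_iff.mpr ⟨ht1 i false, hb i⟩
    -- the key recurrence
    have key : ∀ (i : ℕ) (h1 : i + 1 < k) (hi : i < k),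
        ((f.fH (⟨i+1, h1⟩, true)).2 = (f.fH (⟨i, hi⟩, true)).2) ∧
        ((f.fH (⟨i, hi⟩, true)).2 = true →
          (f.fV ⟨i+1, h1⟩).val = (f.fV ⟨i, hi⟩).val + 1) ∧
        ((f.fH (⟨i, hi⟩, true)).2 = false →
          (f.fV ⟨i+1, h1⟩).val + 1 = (f.fV ⟨i, hi⟩).val) := by
      intro i h1 hi
      have e1 := f.comm_s (⟨i+1, h1⟩, true)
      have e2 := f.comm_s (⟨i, hi⟩, false)
      have e3 := f.comm_inv (Fin.castSucc (⟨i+1, h1⟩ : Fin k), false)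
      have hcs : Fin.castSucc (⟨i+1, h1⟩ : Fin k) = Fin.succ (⟨i, hi⟩ : Fin k) := rfl
      have e1' : f.fE (Fin.castSucc (⟨i+1, h1⟩ : Fin k), true) =
          (lineGraph n).s (f.fH (⟨i+1, h1⟩, true)) := by
        have h : (lineGraph k).s (⟨i+1, h1⟩, true) = (Fin.castSucc (⟨i+1, h1⟩ : Fin k), true) := by
          simp [lineGraph]
        rw [h] at e1; exact e1
      have e2' : f.fE (Fin.castSucc (⟨i+1, h1⟩ : Fin k), false) =
          (lineGraph n).s (f.fH (⟨i, hi⟩, false)) := by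
        have h : (lineGraph k).s (⟨i, hi⟩, false) = (Fin.castSucc (⟨i+1, h1⟩ : Fin k), false) := by
          simp [lineGraph, hcs]
        rw [h] at e2; exact e2
      have e3' : f.fE (Fin.castSucc (⟨i+1, h1⟩ : Fin k), true) =
          (lineGraph n).inv (f.fE (Fin.castSucc (⟨i+1, h1⟩ : Fin k), false)) := by
        have h : (lineGraph k).inv (Fin.castSucc (⟨i+1, h1⟩ : Fin k), false) =
            (Fin.castSucc (⟨i+1, h1⟩ : Fin k), true) := by simp [lineGraph]
        rw [h] at e3; exact e3
      have main : (lineGraph n).s (f.fH (⟨i+1, h1⟩, true)) =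
          (lineGraph n).inv ((lineGraph n).s (f.fH (⟨i, hi⟩, false))) := by
        rw [← e1', ← e2', e3']
      rw [hp1 ⟨i+1, h1⟩, hp0 ⟨i, hi⟩] at main
      rcases hB1 : (f.fH (⟨i+1, h1⟩, true)).2 with _ | _ <;>
        rcases hB0 : (f.fH (⟨i, hi⟩, true)).2 with _ | _ <;>
          rw [hB1, hB0] at main <;>
            simp only [lineGraph, Bool.not_false, Bool.not_true, if_true, if_false,
              Bool.false_eq_true, Bool.true_eq_false, ite_true, ite_false] at main <;>
              injection main with m1 m2
      all_goals first
        | exact Bool.noConfusion m2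
        | (refine ⟨rfl, ?_, ?_⟩ <;> intro hcond <;>
            first
              | exact Bool.noConfusion hcond
              | exact congrArg Fin.val m1)
    have glob : ∀ (i : ℕ) (h : i < k),
        ((f.fH (⟨i, h⟩, true)).2 = (f.fH (⟨0, hk⟩, true)).2) ∧
        ((f.fH (⟨0, hk⟩, true)).2 = true →
          (f.fV ⟨i, h⟩).val = (f.fV ⟨0, hk⟩).val + i) ∧
        ((f.fH (⟨0, hk⟩, true)).2 = false →
          (f.fV ⟨i, h⟩).val + i = (f.fV ⟨0, hk⟩).val) := by
      intro i
      induction i with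
      | zero =>
        intro h
        exact ⟨rfl, fun _ => rfl, fun _ => rfl⟩
      | succ i ih =>
        intro h
        have hi : i < k := Nat.lt_of_succ_lt h
        obtain ⟨ib, it, if'⟩ := ih hi
        obtain ⟨kb, kt, kf⟩ := key i h hi
        refine ⟨kb.trans ib, ?_, ?_⟩
        · intro h0
          have ha := it h0
          have hb2 := kt (ib.trans h0)
          omega
        · intro h0
          have ha := if' h0
          have hb2 := kf (ib.trans h0)
          omega
    have hkk : k - 1 < k := by omega
    rcases hbb : (f.fH (⟨0, hk⟩, true)).2 with _ | _
    · -- descending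
      right
      have hlast := (glob (k-1) hkk).2.2 hbb
      have hw0 : (f.fV ⟨0, hk⟩).val < n := (f.fV ⟨0, hk⟩).isLt
      refine ⟨(f.fV ⟨0, hk⟩).val + 1, by omega, by omega, ?_⟩
      have hVp : ∀ (j : ℕ) (hj : j < k), (f.fV ⟨j, hj⟩) =
          (⟨(f.fV ⟨0, hk⟩).val - j, by omega⟩ : Fin n) := by
        intro j hj
        have hg := (glob j hj).2.2 hbb
        exact Fin.ext (by simp; omega)
      have hHp : f.fH = (descHom k n ((f.fV ⟨0, hk⟩).val + 1) (by omega) (by omega)).fH := by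
        funext p
        rcases p with ⟨⟨j, hj⟩, c⟩
        have h1 : (f.fH (⟨j, hj⟩, c)).1 = f.fV ⟨j, hj⟩ := ht1 _ _
        have h2t : (f.fH (⟨j, hj⟩, true)).2 = false := (glob j hj).1.trans hbb
        refine Prod.ext_iff.mpr ⟨?_, ?_⟩
        · rw [h1, hVp j hj]
          exact Fin.ext (by simp [descHom])
        · cases c
          · rw [hb ⟨j, hj⟩, h2t]; rfl
          · rw [h2t]; rfl
      apply FGHom.ext'
      · exact fE_eq_of_fH_eq hk f _ hHp
      · exact hHp
      · funext v
        rcases v with ⟨j, hj⟩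
        rw [hVp j hj]
        exact Fin.ext (by simp [descHom])
    · -- ascending
      left
      have hlast := (glob (k-1) hkk).2.1 hbb
      have hl2 : (f.fV ⟨k-1, hkk⟩).val < n := (f.fV ⟨k-1, hkk⟩).isLt
      refine ⟨(f.fV ⟨0, hk⟩).val, by omega, ?_⟩
      have hVp : ∀ (j : ℕ) (hj : j < k), (f.fV ⟨j, hj⟩) =
          (⟨(f.fV ⟨0, hk⟩).val + j, by omega⟩ : Fin n) := by
        intro j hj
        have hg := (glob j hj).2.1 hbb
        exact Fin.ext (by simp; omega)
      have hHp : f.fH = (ascHom k n ((f.fV ⟨0, hk⟩).val) (by omega)).fH := by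
        funext p
        rcases p with ⟨⟨j, hj⟩, c⟩
        have h1 : (f.fH (⟨j, hj⟩, c)).1 = f.fV ⟨j, hj⟩ := ht1 _ _
        have h2t : (f.fH (⟨j, hj⟩, true)).2 = true := (glob j hj).1.trans hbb
        refine Prod.ext_iff.mpr ⟨?_, ?_⟩
        · rw [h1, hVp j hj]
          exact Fin.ext (by simp [ascHom])
        · cases c
          · rw [hb ⟨j, hj⟩, h2t]; rfl
          · rw [h2t]; rfl
      apply FGHom.ext'
      · exact fE_eq_of_fH_eq hk f _ hHp
      · exact hHp
      · funext v
        rcases v with ⟨j, hj⟩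
        rw [hVp j hj]
        exact Fin.ext (by simp [ascHom])


/-- Every étale morphism `L^k → L^n` is pointwise injective; the set of étale
morphisms `L^k → L^n` has exactly `2(n - k + 1)` elements when `n ≥ k`, and is
empty when `n < k`. -/
theorem etale_line_to_line (k n : ℕ) :
    (∀ f : FGHom (lineGraph k) (lineGraph n), f.Etale →
      Function.Injective f.fE ∧ Function.Injective f.fH ∧
        Function.Injective f.fV) ∧
    (k ≤ n →
      Nat.card {f : FGHom (lineGraph k) (lineGraph n) // f.Etale} =
        2 * (n - k + 1)) ∧
    (n < k → IsEmpty {f : FGHom (lineGraph k) (lineGraph n) // f.Etale}) := by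
  refine ⟨?_, ?_, ?_⟩
  · -- pointwise injectivity
    intro f hf
    rcases classify k n f hf with ⟨a, h, rfl⟩ | ⟨m, h1, h2, rfl⟩
    · refine ⟨?_, ?_, ?_⟩
      · rintro ⟨⟨x, hx⟩, b⟩ ⟨⟨y, hy⟩, c⟩ hxy
        simp only [ascHom] at hxy
        injection hxy with p1 p2
        injection p1 with p1
        have p1' : a + x = a + y := p1
        obtain rfl : x = y := by omega
        rw [p2]
      · rintro ⟨⟨x, hx⟩, b⟩ ⟨⟨y, hy⟩, c⟩ hxy
        simp only [ascHom] at hxy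
        injection hxy with p1 p2
        injection p1 with p1
        have p1' : a + x = a + y := p1
        obtain rfl : x = y := by omega
        rw [p2]
      · rintro ⟨x, hx⟩ ⟨y, hy⟩ hxy
        simp only [ascHom] at hxy
        injection hxy with p1
        have p1' : a + x = a + y := p1
        exact Fin.ext (show x = y by omega)
    · refine ⟨?_, ?_, ?_⟩
      · rintro ⟨⟨x, hx⟩, b⟩ ⟨⟨y, hy⟩, c⟩ hxy
        simp only [descHom] at hxy
        injection hxy with p1 p2
        injection p1 with p1
        have p1' : m - x = m - y := p1
        obtain rfl : x = y := by omega
        rw [show b = c by simpa using p2]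
      · rintro ⟨⟨x, hx⟩, b⟩ ⟨⟨y, hy⟩, c⟩ hxy
        simp only [descHom] at hxy
        injection hxy with p1 p2
        injection p1 with p1
        have p1' : m - 1 - x = m - 1 - y := p1
        obtain rfl : x = y := by omega
        rw [show b = c by simpa using p2]
      · rintro ⟨x, hx⟩ ⟨y, hy⟩ hxy
        simp only [descHom] at hxy
        injection hxy with p1
        have p1' : m - 1 - x = m - 1 - y := p1
        exact Fin.ext (show x = y by omega)
  · -- counting
    intro hkn
    have bij : Function.Bijective (fun p : Fin (n - k + 1) × Bool =>
        match p with
        | (x, false) =>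
          (⟨ascHom k n x.val (by have := x.isLt; omega), ascHom_etale k n x.val _⟩ :
            {f : FGHom (lineGraph k) (lineGraph n) // f.Etale})
        | (x, true) =>
          ⟨descHom k n (k + x.val) (by omega) (by have := x.isLt; omega),
            descHom_etale k n (k + x.val) _ _⟩) := by
      constructor
      · rintro ⟨⟨x, hx⟩, b⟩ ⟨⟨y, hy⟩, c⟩ hxy
        cases b <;> cases c <;>
          · injection hxy with hv
            have hE := congrArg (fun g : FGHom (lineGraph k) (lineGraph n) =>
              g.fE ((⟨0, Nat.succ_pos k⟩ : Fin (k+1)), false)) hv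
            simp only [ascHom, descHom] at hE
            injection hE with q1 q2
            first
              | exact Bool.noConfusion q2
              | (injection q1 with q1
                 first
                   | (have q1' : x + 0 = y + 0 := q1
                      obtain rfl : x = y := by omega
                      rfl)
                   | (have q1' : (k + x) - 0 = (k + y) - 0 := q1
                      obtain rfl : x = y := by omega
                      rfl))
      · rintro ⟨f, hf⟩
        rcases classify k n f hf with ⟨a, h, rfl⟩ | ⟨m, h1, h2, rfl⟩
        · refine ⟨(⟨a, by omega⟩, false), ?_⟩
          exact Subtype.ext rfl
        · refine ⟨(⟨m - k, by omega⟩, true), ?_⟩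
          exact Subtype.ext (descHom_eq k n (show k + (m - k) = m by omega) (by omega) (by omega) h1 h2)
    have hcard := Nat.card_eq_of_bijective _ bij
    rw [← hcard]
    simp only [Nat.card_eq_fintype_card, Fintype.card_prod, Fintype.card_fin,
      Fintype.card_bool]
    omega
  · -- emptiness
    intro hnk
    constructor
    rintro ⟨f, hf⟩
    rcases classify k n f hf with ⟨a, h, _⟩ | ⟨m, h1, h2, _⟩ <;> omega
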